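/- Let T be a balanced tree with k levels (k ≥ 2), L its graph Laplacian, and λ an eigenvalue of L. Let Z be the set of vertices at which every eigenvector of L with eigenvalue λ vanishes. Then Z is a union of full levels: if u ∈ Z and w is a vertex at the same level as u, then w ∈ Z. -/

import Mathlib

open scoped Classical

/-- Vertices of the balanced tree with `k` levels and branching sequence `c`:
a vertex at level `l` (`0 ≤ l ≤ k-1`) is a function assigning to each `i < l` a
label in `Fin (c i)` (the label of the level-`(i+1)` ancestor among its siblings). -/
abbrev BTVert (k : ℕ) (c : ℕ → ℕ) : Type := Σ l : Fin k, ∀ i : Fin l.val, Fin (c i.val)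

/-- `p` is the parent of `v` in the balanced tree. -/
def IsParentOf {k : ℕ} {c : ℕ → ℕ} (p v : BTVert k c) : Prop :=
  ∃ h : p.1.val + 1 = v.1.val,
    ∀ i : Fin p.1.val, v.2 ⟨i.val, by have := i.isLt; omega⟩ = p.2 i

/-- The balanced tree as a simple graph: each non-root vertex is adjacent to its parent. -/
def btGraph (k : ℕ) (c : ℕ → ℕ) : SimpleGraph (BTVert k c) where
  Adj u v := IsParentOf u v ∨ IsParentOf v u
  symm := ⟨fun u v h => h.symm⟩
  loopless := ⟨fun v h => by
    rcases h with ⟨h, -⟩ | ⟨h, -⟩ <;> omega⟩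

/-- The root (the unique vertex at level 0). -/
def btRoot (k : ℕ) (c : ℕ → ℕ) (hk : 0 < k) : BTVert k c :=
  ⟨⟨0, hk⟩, fun i => i.elim0⟩

/-- `u` belongs to the maximal subtree rooted at `v` (`u` is `v` or a descendant of `v`). -/
def InSubtree {k : ℕ} {c : ℕ → ℕ} (v u : BTVert k c) : Prop :=
  ∃ h : v.1.val ≤ u.1.val,
    ∀ i : Fin v.1.val, u.2 ⟨i.val, by have := i.isLt; omega⟩ = v.2 i

/-- A function on the vertices is stratified if it only depends on the level. -/
def Stratified {k : ℕ} {c : ℕ → ℕ} (f : BTVert k c → ℝ) : Prop :=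
  ∀ u v : BTVert k c, u.1 = v.1 → f u = f v

/-- Number of vertices at level `l`: `n(l) = c(0) ⋯ c(l-1)`. -/
def nlev (c : ℕ → ℕ) (l : ℕ) : ℕ := ∏ i ∈ Finset.range l, c i

/-- The common degree `d(l)` of the vertices at level `l`. -/
def branchDeg (k : ℕ) (c : ℕ → ℕ) (l : ℕ) : ℕ :=
  if l = 0 then c 0 else if l = k - 1 then 1 else c l + 1

/-- The symmetric tridiagonal matrix `T^{(l0)}` with diagonal `d(l0), …, d(k-1)` and
off-diagonal `√c(l0), …, √c(k-2)`. -/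
noncomputable def matT (k : ℕ) (c : ℕ → ℕ) (l0 : ℕ) :
    Matrix (Fin (k - l0)) (Fin (k - l0)) ℝ := fun i j =>
  if i = j then (branchDeg k c (l0 + i.val) : ℝ)
  else if i.val + 1 = j.val then Real.sqrt (c (l0 + i.val))
  else if j.val + 1 = i.val then Real.sqrt (c (l0 + j.val))
  else 0

/-- The tridiagonal matrix `S^{(l0)}` with diagonal `d(l0), …, d(k-1)`, subdiagonal
entries `-1` and superdiagonal entries `-c(l0), …, -c(k-2)`. -/
def matS (k : ℕ) (c : ℕ → ℕ) (l0 : ℕ) :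
    Matrix (Fin (k - l0)) (Fin (k - l0)) ℝ := fun i j =>
  if i = j then (branchDeg k c (l0 + i.val) : ℝ)
  else if i.val + 1 = j.val then -(c (l0 + i.val) : ℝ)
  else if j.val + 1 = i.val then -1
  else 0

/-- `lam` is an eigenvalue of the matrix `A`. -/
def IsEigenvalue {V : Type*} [Fintype V] (A : Matrix V V ℝ) (lam : ℝ) : Prop :=
  ∃ f : V → ℝ, f ≠ 0 ∧ A.mulVec f = lam • f

/-- The (geometric) multiplicity of `lam` as an eigenvalue of `A`. -/
noncomputable def eigMult {V : Type*} [Fintype V] (A : Matrix V V ℝ) (lam : ℝ) : ℕ :=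
  Module.finrank ℝ
    ↥(LinearMap.ker (A.mulVecLin - lam • (LinearMap.id : (V → ℝ) →ₗ[ℝ] (V → ℝ))))

/-- The Dirichlet Laplacian on a subset `Ω` of the vertices of the balanced tree:
the principal submatrix of the Laplacian with rows and columns indexed by `Ω`. -/
noncomputable def dirichletLap (k : ℕ) (c : ℕ → ℕ) (Ω : Set (BTVert k c)) :
    Matrix Ω Ω ℝ := fun u v => (btGraph k c).lapMatrix ℝ u.1 v.1

noncomputable def sig {k : ℕ} {c : ℕ → ℕ} (l : Fin k)
    (a b : ∀ i : Fin l.val, Fin (c i.val)) (v : BTVert k c) : BTVert k c :=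
  ⟨v.1, fun i =>
    if h : i.val < l.val ∧ ∀ j : Fin i.val, ∀ hjl : j.val < l.val,
        v.2 ⟨j.val, by have := j.isLt; have := i.isLt; omega⟩ = a ⟨j.val, hjl⟩ then
      Equiv.swap (a ⟨i.val, h.1⟩) (b ⟨i.val, h.1⟩) (v.2 i)
    else v.2 i⟩

lemma sig_fst {k : ℕ} {c : ℕ → ℕ} (l : Fin k) (a b : ∀ i : Fin l.val, Fin (c i.val))
    (v : BTVert k c) : (sig l a b v).1 = v.1 := rfl

lemma sig_coord {k : ℕ} {c : ℕ → ℕ} (l : Fin k) (a b : ∀ i : Fin l.val, Fin (c i.val))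
    (x y : BTVert k c) (i : ℕ) (hix : i < x.1.val) (hiy : i < y.1.val)
    (hpre : ∀ j, (hj : j < i) → x.2 ⟨j, by omega⟩ = y.2 ⟨j, by omega⟩) :
    (sig l a b x).2 ⟨i, hix⟩ = (sig l a b y).2 ⟨i, hiy⟩ ↔
      x.2 ⟨i, hix⟩ = y.2 ⟨i, hiy⟩ := by
  have hcond : (i < l.val ∧ ∀ j : Fin i, ∀ hjl : j.val < l.val,
        x.2 ⟨j.val, by have := j.isLt; omega⟩ = a ⟨j.val, hjl⟩) ↔
      (i < l.val ∧ ∀ j : Fin i, ∀ hjl : j.val < l.val,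
        y.2 ⟨j.val, by have := j.isLt; omega⟩ = a ⟨j.val, hjl⟩) := by
    constructor
    · rintro ⟨h1, h2⟩
      exact ⟨h1, fun j hjl => (hpre j.val j.isLt) ▸ h2 j hjl⟩
    · rintro ⟨h1, h2⟩
      exact ⟨h1, fun j hjl => (hpre j.val j.isLt) ▸ h2 j hjl⟩
  simp only [sig]
  by_cases hx : i < l.val ∧ ∀ j : Fin i, ∀ hjl : j.val < l.val,
      x.2 ⟨j.val, by have := j.isLt; omega⟩ = a ⟨j.val, hjl⟩
  · rw [dif_pos hx, dif_pos (hcond.mp hx)]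
    exact (Equiv.swap _ _).apply_eq_iff_eq
  · rw [dif_neg hx, dif_neg (fun hy => hx (hcond.mpr hy))]

lemma sig_coord_pre {k : ℕ} {c : ℕ → ℕ} (l : Fin k) (a b : ∀ i : Fin l.val, Fin (c i.val))
    (x y : BTVert k c) (hpre2 : ∀ j, (hjx : j < x.1.val) → (hjy : j < y.1.val) →
      ((sig l a b x).2 ⟨j, hjx⟩ = (sig l a b y).2 ⟨j, hjy⟩)) :
    ∀ j, (hjx : j < x.1.val) → (hjy : j < y.1.val) → x.2 ⟨j, hjx⟩ = y.2 ⟨j, hjy⟩ := by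
  intro j
  induction j using Nat.strong_induction_on with
  | _ j ih =>
    intro hjx hjy
    exact (sig_coord l a b x y j hjx hjy
      (fun m hm => ih m hm (by omega) (by omega))).mp (hpre2 j hjx hjy)

lemma sig_inj {k : ℕ} {c : ℕ → ℕ} (l : Fin k) (a b : ∀ i : Fin l.val, Fin (c i.val)) :
    Function.Injective (sig (c := c) l a b) := by
  intro x y h
  obtain ⟨⟨x1, hx1⟩, x2⟩ := x
  obtain ⟨⟨y1, hy1⟩, y2⟩ := y
  have h1 : x1 = y1 := by
    have := congrArg (fun z : BTVert k c => z.1.val) h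
    simpa [sig] using this
  subst h1
  have h2 := (Sigma.mk.inj_iff.mp h).2
  rw [heq_eq_eq] at h2
  have h3 := sig_coord_pre l a b ⟨⟨x1, hx1⟩, x2⟩ ⟨⟨x1, hy1⟩, y2⟩
    (fun j hjx hjy => congrFun h2 ⟨j, hjx⟩)
  simp only [Sigma.mk.inj_iff, Fin.mk.injEq, heq_eq_eq, true_and]
  exact funext fun i => h3 i.val i.isLt i.isLt

lemma sig_parent {k : ℕ} {c : ℕ → ℕ} (l : Fin k) (a b : ∀ i : Fin l.val, Fin (c i.val))
    (p v : BTVert k c) :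
    IsParentOf (sig l a b p) (sig l a b v) ↔ IsParentOf p v := by
  constructor
  · rintro ⟨hlev, hco⟩
    have hl : p.1.val + 1 = v.1.val := hlev
    refine ⟨hl, ?_⟩
    have h3 := sig_coord_pre l a b v p
      (fun j hjv hjp => hco ⟨j, hjp⟩)
    exact fun i => h3 i.val (by have := i.isLt; omega) i.isLt
  · rintro ⟨hlev, hco⟩
    have hl : (sig l a b p).1.val + 1 = (sig l a b v).1.val := hlev
    refine ⟨hl, ?_⟩
    have hl' : p.1.val + 1 = v.1.val := hlev
    have hs1 : (sig l a b v).1.val = v.1.val := rfl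
    have hs2 : (sig l a b p).1.val = p.1.val := rfl
    intro i
    exact (sig_coord l a b v p i.val (by have := i.isLt; omega) i.isLt
      (fun j hj => hco ⟨j, by have := i.isLt; omega⟩)).mpr (hco i)

lemma sig_adj {k : ℕ} {c : ℕ → ℕ} (l : Fin k) (a b : ∀ i : Fin l.val, Fin (c i.val))
    (p v : BTVert k c) :
    (btGraph k c).Adj (sig l a b p) (sig l a b v) ↔ (btGraph k c).Adj p v :=
  or_congr (sig_parent l a b p v) (sig_parent l a b v p)

lemma sig_apply_self {k : ℕ} {c : ℕ → ℕ} (l : Fin k)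
    (a b : ∀ i : Fin l.val, Fin (c i.val)) :
    sig l a b ⟨l, a⟩ = ⟨l, b⟩ := by
  simp only [sig]
  congr 1
  funext i
  rw [dif_pos ⟨i.isLt, by intros; simp⟩]
  exact Equiv.swap_apply_left _ _

noncomputable def sigEquiv {k : ℕ} {c : ℕ → ℕ} (l : Fin k)
    (a b : ∀ i : Fin l.val, Fin (c i.val)) : BTVert k c ≃ BTVert k c :=
  Equiv.ofBijective _ (Finite.injective_iff_bijective.mp (sig_inj l a b))

lemma sigEquiv_apply {k : ℕ} {c : ℕ → ℕ} (l : Fin k)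
    (a b : ∀ i : Fin l.val, Fin (c i.val)) (v : BTVert k c) :
    sigEquiv l a b v = sig l a b v := rfl

lemma sig_degree {k : ℕ} {c : ℕ → ℕ} (l : Fin k)
    (a b : ∀ i : Fin l.val, Fin (c i.val)) (v : BTVert k c) :
    (btGraph k c).degree (sig l a b v) = (btGraph k c).degree v := by
  classical
  rw [← SimpleGraph.card_neighborFinset_eq_degree,
    ← SimpleGraph.card_neighborFinset_eq_degree]
  refine (Finset.card_bij (fun u _ => sig l a b u) ?_ ?_ ?_).symm
  · intro u hu
    rw [SimpleGraph.mem_neighborFinset] at hu ⊢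
    exact (sig_adj l a b v u).mpr hu
  · intro u₁ _ u₂ _ h
    exact sig_inj l a b h
  · intro u' hu'
    rw [SimpleGraph.mem_neighborFinset] at hu'
    refine ⟨(sigEquiv l a b).symm u', ?_, ?_⟩
    · rw [SimpleGraph.mem_neighborFinset]
      have h2 : sig l a b ((sigEquiv l a b).symm u') = u' :=
        (sigEquiv l a b).apply_symm_apply u'
      rw [← h2] at hu'
      exact (sig_adj l a b v _).mp hu'
    · exact (sigEquiv l a b).apply_symm_apply u'

lemma lap_sig {k : ℕ} {c : ℕ → ℕ} (l : Fin k)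
    (a b : ∀ i : Fin l.val, Fin (c i.val)) (f : BTVert k c → ℝ) (v : BTVert k c) :
    ((btGraph k c).lapMatrix ℝ).mulVec (fun x => f (sig l a b x)) v
      = ((btGraph k c).lapMatrix ℝ).mulVec f (sig l a b v) := by
  rw [SimpleGraph.lapMatrix_mulVec_apply, SimpleGraph.lapMatrix_mulVec_apply, sig_degree]
  congr 1
  refine Finset.sum_bij (fun u _ => sig l a b u) ?_ ?_ ?_ (fun _ _ => rfl)
  · intro u hu
    rw [SimpleGraph.mem_neighborFinset] at hu ⊢
    exact (sig_adj l a b v u).mpr hu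
  · intro u₁ _ u₂ _ h
    exact sig_inj l a b h
  · intro u' hu'
    rw [SimpleGraph.mem_neighborFinset] at hu'
    refine ⟨(sigEquiv l a b).symm u', ?_, ?_⟩
    · rw [SimpleGraph.mem_neighborFinset]
      have h2 : sig l a b ((sigEquiv l a b).symm u') = u' :=
        (sigEquiv l a b).apply_symm_apply u'
      rw [← h2] at hu'
      exact (sig_adj l a b v _).mp hu'
    · exact (sigEquiv l a b).apply_symm_apply u'

/-- the set of common vanishing vertices of the `λ`-eigenfunctions of the
Laplacian of a balanced tree is a union of full levels. -/
theorem common_vanishing_set_is_union_of_levels (k : ℕ) (hk : 2 ≤ k) (c : ℕ → ℕ)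
    (hc : ∀ l, l ≤ k - 2 → 1 ≤ c l) (lam : ℝ)
    (hlam : IsEigenvalue ((btGraph k c).lapMatrix ℝ) lam) (u w : BTVert k c)
    (hu : ∀ f : BTVert k c → ℝ, f ≠ 0 →
      ((btGraph k c).lapMatrix ℝ).mulVec f = lam • f → f u = 0)
    (huw : u.1 = w.1) :
    ∀ f : BTVert k c → ℝ, f ≠ 0 →
      ((btGraph k c).lapMatrix ℝ).mulVec f = lam • f → f w = 0 := by
  intro f hf hLf
  obtain ⟨ul, u2⟩ := u
  obtain ⟨wl, w2⟩ := w
  have hl : ul = wl := huw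
  subst hl
  set g : BTVert k c → ℝ := fun x => f (sig ul u2 w2 x) with hgdef
  have hsig : sig ul u2 w2 ⟨ul, u2⟩ = ⟨ul, w2⟩ := sig_apply_self _ _ _
  have hg0 : g ≠ 0 := by
    intro h0
    apply hf
    funext x
    have hx : sig ul u2 w2 ((sigEquiv ul u2 w2).symm x) = x :=
      (sigEquiv ul u2 w2).apply_symm_apply x
    have h1 := congrFun h0 ((sigEquiv ul u2 w2).symm x)
    simpa [hgdef, hx] using h1
  have hLg : ((btGraph k c).lapMatrix ℝ).mulVec g = lam • g := by
    funext v
    have h1 := lap_sig ul u2 w2 f v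
    rw [hLf] at h1
    simpa [hgdef] using h1
  have hz := hu g hg0 hLg
  rw [hgdef] at hz
  simp only at hz
  rw [hsig] at hz
  exact hz
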